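/- For every integer k ≥ 2 there exists an admissible set H = {h_1, ..., h_k} with h_1 = 0 < h_2 < ... < h_k such that: (i) every h_i is divisible by K = 4·∏_{p < 2k, p prime} p; (ii) for all 1 ≤ i < j ≤ k, the difference h_j - h_i has a prime divisor p > 2k with p^2 not dividing h_j - h_i; and (iii) if {i,j} ≠ {s,t} are two distinct pairs with 1 ≤ i < j ≤ k and 1 ≤ s < t ≤ k, then no prime p > 2k divides both h_i - h_j and h_s - h_t. -/

import Mathlib

lemma crt_list : ∀ (l : List (ℕ × ℤ)), (l.map Prod.fst).Pairwise Nat.Coprime →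
    ∃ x : ℤ, ∀ q ∈ l, (q.1 : ℤ) ∣ x - q.2 := by
  intro l
  induction l with
  | nil => exact fun _ => ⟨0, by simp⟩
  | cons hd tl ih =>
    intro hp
    rw [List.map_cons, List.pairwise_cons] at hp
    obtain ⟨y, hy⟩ := ih hp.2
    have hcop : hd.1.Coprime (tl.map Prod.fst).prod :=
      Nat.coprime_list_prod_right_iff.mpr (by intro t ht; exact hp.1 t ht)
    have hic : IsCoprime (hd.1 : ℤ) (((tl.map Prod.fst).prod : ℕ) : ℤ) :=
      Nat.Coprime.isCoprime hcop
    obtain ⟨u, v, huv⟩ := hic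
    set M : ℤ := (((tl.map Prod.fst).prod : ℕ) : ℤ) with hM
    refine ⟨hd.2 * (v * M) + y * (u * hd.1), ?_⟩
    intro q hq
    rcases List.mem_cons.mp hq with rfl | hq
    · exact ⟨(y - q.2) * u, by linear_combination q.2 * huv⟩
    · have h1 : (q.1 : ℤ) ∣ M := by
        rw [hM]
        exact_mod_cast List.dvd_prod (List.mem_map_of_mem (f := Prod.fst) hq)
      have h2 : M ∣ (hd.2 * (v * M) + y * (u * hd.1)) - y :=
        ⟨(hd.2 - y) * v, by linear_combination y * huv⟩
      have := dvd_add (h1.trans h2) (hy q hq)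
      simpa using this

lemma key_aux (k : ℕ) (hk : 1 ≤ k) : ∀ m, m ≤ k → ∃ c : ℕ → ℤ,
    c 0 = 0 ∧ (∀ i j, i < j → j < m → c i < c j) ∧
    (∀ i j, i < j → j < m → ∃ p : ℕ, p.Prime ∧ 2 * k < p ∧
      (p : ℤ) ∣ c j - c i ∧ ¬ (p : ℤ) ^ 2 ∣ c j - c i) ∧
    (∀ i j s t, i < j → j < m → s < t → t < m → (i, j) ≠ (s, t) →
      ∀ p : ℕ, p.Prime → 2 * k < p → ¬ ((p : ℤ) ∣ c j - c i ∧ (p : ℤ) ∣ c t - c s)) := by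
  intro m
  induction m with
  | zero =>
    exact fun _ => ⟨fun _ => 0, rfl,
      fun i j hij hj => absurd hj (Nat.not_lt_zero _),
      fun i j hij hj => absurd hj (Nat.not_lt_zero _),
      fun i j s t hij hj => absurd hj (Nat.not_lt_zero _)⟩
  | succ m ih =>
    intro hmk
    obtain ⟨c, hc0, hmono, hP1, hP2⟩ := ih (by omega)
    rcases Nat.eq_zero_or_pos m with rfl | hm
    · exact ⟨c, hc0,
        fun i j hij hj => absurd (by omega : (0:ℕ) < 0) (by omega),
        fun i j hij hj => absurd (by omega : (0:ℕ) < 0) (by omega),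
        fun i j s t hij hj => absurd (by omega : (0:ℕ) < 0) (by omega)⟩
    -- main construction
    have hinf := Nat.infinite_setOf_prime
    set pairs : Finset (ℕ × ℕ) :=
      (Finset.range m ×ˢ Finset.range m).filter (fun z => z.1 < z.2) with hpairs
    set N : ℤ := ∏ z ∈ pairs, (c z.2 - c z.1) with hNdef
    have hN : N ≠ 0 := by
      rw [hNdef]
      apply Finset.prod_ne_zero_iff.mpr
      intro z hz
      rw [hpairs, Finset.mem_filter, Finset.mem_product, Finset.mem_range,
        Finset.mem_range] at hz
      exact sub_ne_zero.mpr (ne_of_gt (hmono _ _ hz.2 hz.1.2))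
    set S : Finset ℕ := N.natAbs.primeFactors.filter (fun q => 2 * k < q) with hSdef
    have hSprime : ∀ q ∈ S, q.Prime := by
      intro q hq
      rw [hSdef, Finset.mem_filter] at hq
      exact Nat.prime_of_mem_primeFactors hq.1
    have hSgt : ∀ q ∈ S, 2 * k < q := by
      intro q hq
      rw [hSdef, Finset.mem_filter] at hq
      exact hq.2
    have hSmem : ∀ q : ℕ, q.Prime → 2 * k < q → ∀ s t : ℕ, s < t → t < m →
        (q : ℤ) ∣ c t - c s → q ∈ S := by
      intro q hq hq2 s t hst htm hdvd
      have hmem : ((s, t) : ℕ × ℕ) ∈ pairs := by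
        rw [hpairs, Finset.mem_filter, Finset.mem_product, Finset.mem_range, Finset.mem_range]
        exact ⟨⟨by omega, htm⟩, hst⟩
      have hdN : (q : ℤ) ∣ N := by
        rw [hNdef]
        exact hdvd.trans (Finset.dvd_prod_of_mem _ hmem)
      have hdnat : q ∣ N.natAbs := by
        have := Int.natAbs_dvd_natAbs.mpr hdN
        simpa using this
      rw [hSdef, Finset.mem_filter]
      exact ⟨Nat.mem_primeFactors.mpr ⟨hq, hdnat, Int.natAbs_ne_zero.mpr hN⟩, hq2⟩
    set n0 : ℕ := 2 * k + 1 + S.sup id with hn0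
    set p : ℕ → ℕ := fun i => Nat.nth Nat.Prime (n0 + i) with hpdef
    have hpp : ∀ i, (p i).Prime := fun i => Nat.prime_nth_prime _
    have hpge : ∀ i, n0 + i ≤ p i := fun i => (Nat.nth_strictMono hinf).le_apply
    have hp2k : ∀ i, 2 * k < p i := fun i => by have := hpge i; omega
    have hpS : ∀ i, p i ∉ S := by
      intro i hi
      have h1 : p i ≤ S.sup id := Finset.le_sup (f := id) hi
      have := hpge i; omega
    have hpinj : ∀ i j, p i = p j → i = j := by
      intro i j h
      have := Nat.nth_injective hinf h
      omega
    -- residues avoiding c i mod q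
    have hres : ∀ q : ℕ, ∃ rq : ℤ, q ∈ S → ∀ i, i < m → ¬ (q : ℤ) ∣ c i - rq := by
      intro q
      by_cases hq : q ∈ S
      · have hqk : 2 * k < q := hSgt q hq
        have hq0 : (0 : ℤ) < q := by exact_mod_cast (by omega : 0 < q)
        set T : Finset ℕ := (Finset.range m).image (fun i => ((c i) % (q : ℤ)).toNat) with hT
        have hTcard : T.card ≤ m := le_trans Finset.card_image_le (by simp)
        have hsub : ¬ Finset.range q ⊆ T := by
          intro hsubs
          have := Finset.card_le_card hsubs
          rw [Finset.card_range] at this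
          omega
        obtain ⟨rn, hrn1, hrn2⟩ := Finset.not_subset.mp hsub
        rw [Finset.mem_range] at hrn1
        refine ⟨(rn : ℤ), fun _ i him hdvd => ?_⟩
        have hmodeq : (rn : ℤ) % (q : ℤ) = (c i) % (q : ℤ) := Int.modEq_iff_dvd.mpr hdvd
        have hrnlt : (rn : ℤ) % (q : ℤ) = rn :=
          Int.emod_eq_of_lt (by positivity) (by exact_mod_cast hrn1)
        apply hrn2
        rw [hT, Finset.mem_image]
        exact ⟨i, Finset.mem_range.mpr him, by rw [← hmodeq, hrnlt]; simp⟩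
      · exact ⟨0, fun h => absurd h hq⟩
    choose r hr using hres
    -- the CRT list
    set A : List (ℕ × ℤ) := (List.range m).map (fun i => ((p i) ^ 2, c i + (p i : ℤ))) with hA
    set B : List (ℕ × ℤ) := S.toList.map (fun q => (q, r q)) with hB
    set L : List (ℕ × ℤ) := A ++ B with hL
    have hAfst : A.map Prod.fst = (List.range m).map (fun i => (p i) ^ 2) := by
      rw [hA, List.map_map]; rfl
    have hBfst : B.map Prod.fst = S.toList := by
      rw [hB, List.map_map]
      exact List.map_id _
    have hpw : (L.map Prod.fst).Pairwise Nat.Coprime := by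
      rw [hL, List.map_append, List.pairwise_append]
      refine ⟨?_, ?_, ?_⟩
      · rw [hAfst]
        refine List.Pairwise.map _ ?_ List.pairwise_lt_range
        intro a b hab
        exact Nat.Coprime.pow _ _
          ((Nat.coprime_primes (hpp a) (hpp b)).mpr (fun h => by have := hpinj _ _ h; omega))
      · rw [hBfst]
        refine List.Pairwise.imp_of_mem ?_ (Finset.nodup_toList S)
        intro a b ha hb hne
        exact (Nat.coprime_primes (hSprime a (Finset.mem_toList.mp ha))
          (hSprime b (Finset.mem_toList.mp hb))).mpr hne
      · intro a ha b hb
        rw [hAfst] at ha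
        rw [hBfst] at hb
        obtain ⟨i, hi, rfl⟩ := List.mem_map.mp ha
        have hbS : b ∈ S := Finset.mem_toList.mp hb
        refine Nat.Coprime.pow_left _
          ((Nat.coprime_primes (hpp i) (hSprime b hbS)).mpr ?_)
        intro h
        exact hpS i (h ▸ hbS)
    obtain ⟨x0, hx0⟩ := crt_list L hpw
    set P : ℕ := (L.map Prod.fst).prod with hP
    have hPpos : 0 < P := by
      rw [hP]
      apply List.prod_pos
      intro a ha
      rw [hL, List.map_append, List.mem_append, hAfst, hBfst] at ha
      rcases ha with ha | ha
      · obtain ⟨i, hi, rfl⟩ := List.mem_map.mp ha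
        exact pow_pos (hpp i).pos 2
      · exact (hSprime a (Finset.mem_toList.mp ha)).pos
    set t : ℕ := (c (m - 1) + 1 - x0).toNat with ht
    set x : ℤ := x0 + t * P with hx
    have hxd : ∀ q ∈ L, (q.1 : ℤ) ∣ x - q.2 := by
      intro q hq
      have hqP : q.1 ∣ P := by
        rw [hP]
        exact List.dvd_prod (List.mem_map_of_mem (f := Prod.fst) hq)
      have h1 : (q.1 : ℤ) ∣ (t : ℤ) * (P : ℤ) :=
        Dvd.dvd.mul_left (by exact_mod_cast hqP) _
      have heq : x - q.2 = (x0 - q.2) + (t : ℤ) * (P : ℤ) := by rw [hx]; ring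
      rw [heq]
      exact dvd_add (hx0 q hq) h1
    have hxgt : ∀ i, i < m → c i < x := by
      intro i him
      have h1 : c i ≤ c (m - 1) := by
        have h : i ≤ m - 1 := by omega
        rcases h.eq_or_lt with rfl | h
        · exact le_refl _
        · exact le_of_lt (hmono _ _ h (by omega))
      have h2 : c (m - 1) + 1 - x0 ≤ (t : ℤ) := Int.self_le_toNat _
      have h3 : (t : ℤ) ≤ (t : ℤ) * (P : ℤ) := by
        have hP1 : (1 : ℤ) ≤ (P : ℤ) := by exact_mod_cast hPpos
        have ht0 : (0 : ℤ) ≤ (t : ℤ) := Int.natCast_nonneg _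
        nlinarith
      rw [hx]
      linarith
    have hxA : ∀ i, i < m → ((p i : ℤ)) ^ 2 ∣ x - (c i + (p i : ℤ)) := by
      intro i him
      have hmem : ((p i) ^ 2, c i + (p i : ℤ)) ∈ L := by
        rw [hL]
        exact List.mem_append_left _
          (by rw [hA]; exact List.mem_map_of_mem (List.mem_range.mpr him))
      have := hxd _ hmem
      simpa using this
    have hxB : ∀ q ∈ S, (q : ℤ) ∣ x - r q := by
      intro q hq
      have hmem : ((q : ℕ), r q) ∈ L := by
        rw [hL]
        exact List.mem_append_right _
          (by rw [hB]; exact List.mem_map_of_mem (Finset.mem_toList.mpr hq))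
      exact hxd _ hmem
    have hA1 : ∀ i, i < m → (p i : ℤ) ∣ x - c i := by
      intro i him
      have h := hxA i him
      have heq : x - c i = (x - (c i + (p i : ℤ))) + (p i : ℤ) := by ring
      rw [heq]
      exact dvd_add ((dvd_pow_self _ two_ne_zero).trans h) dvd_rfl
    have hA2 : ∀ i, i < m → ¬ ((p i : ℤ)) ^ 2 ∣ x - c i := by
      intro i him hdvd
      have h := hxA i him
      have hdp : ((p i : ℤ)) ^ 2 ∣ (p i : ℤ) := by
        have hdp' := dvd_sub hdvd h
        rw [show (x - c i) - (x - (c i + (p i : ℤ))) = (p i : ℤ) by ring] at hdp'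
        exact hdp'
      have hle := Int.le_of_dvd (by exact_mod_cast (hpp i).pos) hdp
      have h2 : 2 ≤ p i := (hpp i).two_le
      have h2' : (2 : ℤ) ≤ (p i : ℤ) := by exact_mod_cast h2
      nlinarith
    have hBav : ∀ q : ℕ, q.Prime → 2 * k < q → ∀ i, i < m → (q : ℤ) ∣ x - c i →
        ∀ s t', s < t' → t' < m → ¬ (q : ℤ) ∣ c t' - c s := by
      intro q hq hq2 i him hdvd s t' hst htm hd2
      have hqS : q ∈ S := hSmem q hq hq2 s t' hst htm hd2
      have h1 := hxB q hqS
      have h3 : (q : ℤ) ∣ c i - r q := by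
        have heq : c i - r q = (x - r q) - (x - c i) := by ring
        rw [heq]
        exact dvd_sub h1 hdvd
      exact hr q hqS i him h3
    set c' : ℕ → ℤ := fun i => if i < m then c i else x with hc'
    have hcl : ∀ a, a < m → c' a = c a := fun a ha => if_pos ha
    have hcm : ∀ a, m ≤ a → c' a = x := fun a ha => if_neg (by omega)
    refine ⟨c', by rw [hcl 0 hm, hc0], ?_, ?_, ?_⟩
    · intro i j hij hj
      by_cases hjm : j < m
      · rw [hcl i (by omega), hcl j hjm]
        exact hmono i j hij hjm
      · rw [hcl i (by omega), hcm j (by omega)]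
        exact hxgt i (by omega)
    · intro i j hij hj
      by_cases hjm : j < m
      · obtain ⟨q, h1, h2, h3, h4⟩ := hP1 i j hij hjm
        rw [← hcl i (by omega), ← hcl j hjm] at h3 h4
        exact ⟨q, h1, h2, h3, h4⟩
      · have him : i < m := by omega
        rw [hcl i him, hcm j (by omega)]
        exact ⟨p i, hpp i, hp2k i, hA1 i him, hA2 i him⟩
    · intro i j s t' hij hj hst ht' hne q hq hq2 hd
      obtain ⟨d1, d2⟩ := hd
      by_cases hjm : j < m <;> by_cases htm : t' < m
      · rw [hcl i (by omega), hcl j hjm] at d1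
        rw [hcl s (by omega), hcl t' htm] at d2
        exact hP2 i j s t' hij hjm hst htm hne q hq hq2 ⟨d1, d2⟩
      · rw [hcl i (by omega), hcl j hjm] at d1
        rw [hcl s (by omega), hcm t' (by omega)] at d2
        exact hBav q hq hq2 s (by omega) d2 i j hij hjm d1
      · rw [hcl i (by omega), hcm j (by omega)] at d1
        rw [hcl s (by omega), hcl t' htm] at d2
        exact hBav q hq hq2 i (by omega) d1 s t' hst htm d2
      · rw [hcl i (by omega), hcm j (by omega)] at d1
        rw [hcl s (by omega), hcm t' (by omega)] at d2
        have hisne : i ≠ s := by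
          intro h
          apply hne
          rw [h]
          have : j = t' := by omega
          rw [this]
        rcases hisne.lt_or_gt with hlt | hlt
        · have hds : (q : ℤ) ∣ c s - c i := by
            have hdp' := dvd_sub d1 d2
            rw [show (x - c i) - (x - c s) = c s - c i by ring] at hdp'
            exact hdp'
          exact hBav q hq hq2 i (by omega) d1 i s hlt (by omega) hds
        · have hds : (q : ℤ) ∣ c i - c s := by
            have hdp' := dvd_sub d2 d1
            rw [show (x - c s) - (x - c i) = c i - c s by ring] at hdp'
            exact hdp'
          exact hBav q hq hq2 s (by omega) d2 s i hlt (by omega) hds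

theorem stmt_11 (k : ℕ) (hk : 2 ≤ k) :
    ∃ h : Fin k → ℕ,
      h ⟨0, by omega⟩ = 0 ∧ StrictMono h ∧
      (∀ p : ℕ, p.Prime → ∃ a : ZMod p, ∀ i, (h i : ZMod p) ≠ a) ∧
      (∀ i, (4 * ∏ p ∈ (Finset.range (2 * k)).filter Nat.Prime, p) ∣ h i) ∧
      (∀ i j : Fin k, i < j →
        ∃ p : ℕ, p.Prime ∧ 2 * k < p ∧ p ∣ (h j - h i) ∧ ¬ p ^ 2 ∣ (h j - h i)) ∧
      (∀ i j s t : Fin k, i < j → s < t → (i, j) ≠ (s, t) →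
        ∀ p : ℕ, p.Prime → 2 * k < p → ¬ (p ∣ (h j - h i) ∧ p ∣ (h t - h s))) := by
  obtain ⟨c, hc0, hmono, hP1, hP2⟩ := key_aux k (by omega) k le_rfl
  set K : ℕ := 4 * ∏ p ∈ (Finset.range (2 * k)).filter Nat.Prime, p with hK
  have hKpos : 0 < K := by
    rw [hK]
    apply Nat.mul_pos (by omega)
    apply Finset.prod_pos
    intro q hq
    exact (Finset.mem_filter.mp hq).2.pos
  have hKnd : ∀ p : ℕ, p.Prime → 2 * k < p → ¬ p ∣ K := by
    intro p hp hp2 hdvd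
    rw [hK] at hdvd
    rcases (Nat.Prime.dvd_mul hp).mp hdvd with h | h
    · have h4 : p ∣ 2 ^ 2 := by norm_num; exact h
      have := (Nat.prime_dvd_prime_iff_eq hp Nat.prime_two).mp (hp.dvd_of_dvd_pow h4)
      omega
    · obtain ⟨q, hq, hpq⟩ := hp.prime.exists_mem_finset_dvd h
      rw [Finset.mem_filter, Finset.mem_range] at hq
      have := (Nat.prime_dvd_prime_iff_eq hp hq.2).mp hpq
      omega
  have hcnn : ∀ i : ℕ, i < k → 0 ≤ c i := by
    intro i hik
    rcases Nat.eq_zero_or_pos i with rfl | hi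
    · rw [hc0]
    · rw [← hc0]; exact le_of_lt (hmono 0 i hi hik)
  set h : Fin k → ℕ := fun i => K * (c i.val).toNat with hh
  have hhc : ∀ i : Fin k, ((h i : ℕ) : ℤ) = (K : ℤ) * c i.val := by
    intro i
    rw [hh]
    push_cast
    rw [Int.toNat_of_nonneg (hcnn i.val i.isLt)]
  have hsm : StrictMono h := by
    intro a b hab
    have hcc : c a.val < c b.val := hmono a.val b.val hab b.isLt
    have hb0 : 0 < c b.val := lt_of_le_of_lt (hcnn a.val a.isLt) hcc
    show K * (c a.val).toNat < K * (c b.val).toNat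
    exact (Nat.mul_lt_mul_left hKpos).mpr ((Int.toNat_lt_toNat hb0).mpr hcc)
  have hdiff : ∀ i j : Fin k, i < j → ((h j - h i : ℕ) : ℤ) = (K : ℤ) * (c j.val - c i.val) := by
    intro i j hij
    rw [Nat.cast_sub (le_of_lt (hsm hij)), hhc, hhc]
    ring
  have hcop : ∀ p : ℕ, p.Prime → 2 * k < p → IsCoprime (p : ℤ) (K : ℤ) :=
    fun p hp hp2 => Nat.Coprime.isCoprime ((Nat.Prime.coprime_iff_not_dvd hp).mpr (hKnd p hp hp2))
  refine ⟨h, ?_, hsm, ?_, ?_, ?_, ?_⟩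
  · rw [hh]
    simp [hc0]
  · intro p hp
    haveI : Fact p.Prime := ⟨hp⟩
    by_cases hplt : p < 2 * k
    · refine ⟨1, fun i => ?_⟩
      have hpK : p ∣ K := by
        rw [hK]
        exact Dvd.dvd.mul_left
          (Finset.dvd_prod_of_mem _ (Finset.mem_filter.mpr ⟨Finset.mem_range.mpr hplt, hp⟩)) 4
      have hph : p ∣ h i := hpK.trans ⟨(c i.val).toNat, rfl⟩
      rw [(ZMod.natCast_eq_zero_iff _ p).mpr hph]
      exact zero_ne_one
    · by_contra hcon
      push_neg at hcon
      have hsurj : Function.Surjective (fun i : Fin k => ((h i : ℕ) : ZMod p)) := fun a => hcon a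
      have hcard := Fintype.card_le_of_surjective _ hsurj
      rw [ZMod.card, Fintype.card_fin] at hcard
      omega
  · intro i
    exact ⟨(c i.val).toNat, rfl⟩
  · intro i j hij
    obtain ⟨p, h1, h2, h3, h4⟩ := hP1 i.val j.val hij j.isLt
    refine ⟨p, h1, h2, ?_, ?_⟩
    · rw [← Int.natCast_dvd_natCast, hdiff i j hij]
      exact Dvd.dvd.mul_left h3 _
    · intro hd
      apply h4
      have hd' : ((p : ℤ)) ^ 2 ∣ (K : ℤ) * (c j.val - c i.val) := by
        rw [← hdiff i j hij]
        exact_mod_cast Int.natCast_dvd_natCast.mpr hd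
      exact ((hcop p h1 h2).pow_left).dvd_of_dvd_mul_left hd'
  · intro i j s t hij hst hne p hp hp2 hd
    obtain ⟨d1, d2⟩ := hd
    have e1 : (p : ℤ) ∣ c j.val - c i.val := by
      apply (hcop p hp hp2).dvd_of_dvd_mul_left
      rw [← hdiff i j hij]
      exact Int.natCast_dvd_natCast.mpr d1
    have e2 : (p : ℤ) ∣ c t.val - c s.val := by
      apply (hcop p hp hp2).dvd_of_dvd_mul_left
      rw [← hdiff s t hst]
      exact Int.natCast_dvd_natCast.mpr d2
    have hne' : (i.val, j.val) ≠ (s.val, t.val) := by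
      intro hEq
      apply hne
      rw [Prod.ext_iff] at hEq ⊢
      exact ⟨Fin.val_injective hEq.1, Fin.val_injective hEq.2⟩
    exact hP2 i.val j.val s.val t.val hij j.isLt hst t.isLt hne' p hp hp2 ⟨e1, e2⟩
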